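/- For every real y, the sum of squares of the six planar 6-dimensional cosexponential functions satisfies \sum_{k=0}^{5} f_{6k}(y)^2 = 1/3 + (2/3) cosh(\sqrt{3} y). -/

import Mathlib

noncomputable def f6 (k : ℕ) (y : ℝ) : ℝ :=
  ∑' p : ℕ, (-1 : ℝ) ^ p * y ^ (k + 6 * p) / ((k + 6 * p).factorial : ℝ)

lemma f6_summable (k : ℕ) (y : ℝ) :
    Summable (fun p : ℕ => (-1 : ℝ) ^ p * y ^ (k + 6 * p) / ((k + 6 * p).factorial : ℝ)) := by
  have h := (Real.summable_pow_div_factorial |y|).comp_injective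
    (i := fun p : ℕ => k + 6 * p) (fun a b hab => by simp only at hab; omega)
  refine Summable.of_abs (h.congr fun p => ?_)
  simp [Function.comp, abs_div, abs_mul, abs_pow]

lemma key_exp (ζ : ℂ) (hζ : ζ ^ 6 = -1) (y : ℝ) :
    Complex.exp (ζ * y) = ∑ k ∈ Finset.range 6, ζ ^ k * (f6 k y : ℂ) := by
  have H : HasSum (fun n : ℕ => (ζ * y) ^ n / n.factorial) (Complex.exp (ζ * y)) := by
    rw [Complex.exp_eq_exp_ℂ]
    exact NormedSpace.expSeries_div_hasSum_exp (ζ * y)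
  replace H := (((Equiv.prodComm (Fin 6) ℕ).trans (Nat.divModEquiv 6).symm)).hasSum_iff.mpr H
  have Hfib : ∀ k : Fin 6, HasSum (fun p : ℕ =>
      (ζ * (y : ℂ)) ^ (p * 6 + (k : ℕ)) / ((p * 6 + (k : ℕ)).factorial : ℂ))
      (ζ ^ (k : ℕ) * (f6 (k : ℕ) y : ℂ)) := by
    intro k
    have hs : HasSum (fun p : ℕ => (-1 : ℝ) ^ p * y ^ ((k : ℕ) + 6 * p)
        / (((k : ℕ) + 6 * p).factorial : ℝ)) (f6 (k : ℕ) y) := (f6_summable k y).hasSum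
    have hsC := ((Complex.hasSum_ofReal).mpr hs).mul_left (ζ ^ (k : ℕ))
    refine hsC.congr_fun fun p => ?_
    rw [show p * 6 + (k : ℕ) = (k : ℕ) + 6 * p from by ring]
    have hz : ζ ^ ((k : ℕ) + 6 * p) = ζ ^ (k : ℕ) * (-1) ^ p := by
      rw [pow_add, pow_mul, hζ]
    push_cast
    rw [mul_pow, hz]
    ring
  have Htot := H.prod_fiberwise Hfib
  rw [Htot.tsum_eq.symm, tsum_fintype]
  rw [← Fin.sum_univ_eq_sum_range (fun k => ζ ^ k * (f6 k y : ℂ)) 6]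
theorem f6_sum_sq (y : ℝ) :
    ∑ k ∈ Finset.range 6, (f6 k y) ^ 2
      = 1 / 3 + (2 / 3) * Real.cosh (Real.sqrt 3 * y) := by
  have hs : (Real.sqrt 3 : ℂ)^2 = 3 := by
    rw [← Complex.ofReal_pow]; norm_cast
    exact Real.sq_sqrt (by norm_num)
  have hI : Complex.I^2 = -1 := Complex.I_sq
  have h0 := key_exp (((Real.sqrt 3 : ℂ) + Complex.I)/2) (by linear_combination ((9/64 : ℂ) + (45/64 : ℂ) * Complex.I^2 + (15/64 : ℂ) * Complex.I^4 + (9/32 : ℂ) * (Real.sqrt 3 : ℂ) * Complex.I + (5/16 : ℂ) * (Real.sqrt 3 : ℂ) * Complex.I^3 + (3/64 : ℂ) * (Real.sqrt 3 : ℂ)^2 + (15/64 : ℂ) * (Real.sqrt 3 : ℂ)^2 * Complex.I^2 + (3/32 : ℂ) * (Real.sqrt 3 : ℂ)^3 * Complex.I + (1/64 : ℂ) * (Real.sqrt 3 : ℂ)^4) * hs + ((91/64 : ℂ) + (11/16 : ℂ) * Complex.I^2 + (1/64 : ℂ) * Complex.I^4 + (27/32 : ℂ) * (Real.sqrt 3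 : ℂ) * Complex.I + (3/32 : ℂ) * (Real.sqrt 3 : ℂ) * Complex.I^3) * hI) y
  have h1 := key_exp (Complex.I) (by linear_combination (0 : ℂ) * hs + ((1 : ℂ) + (-1 : ℂ) * Complex.I^2 + Complex.I^4) * hI) y
  have h2 := key_exp ((-(Real.sqrt 3 : ℂ) + Complex.I)/2) (by linear_combination ((9/64 : ℂ) + (45/64 : ℂ) * Complex.I^2 + (15/64 : ℂ) * Complex.I^4 + (-9/32 : ℂ) * (Real.sqrt 3 : ℂ) * Complex.I + (-5/16 : ℂ) * (Real.sqrt 3 : ℂ) * Complex.I^3 + (3/64 : ℂ) * (Real.sqrt 3 : ℂ)^2 + (15/64 : ℂ) * (Real.sqrt 3 : ℂ)^2 * Complex.I^2 + (-3/32 : ℂ) * (Real.sqrt 3 : ℂ)^3 * Complex.I + (1/64 : ℂ) * (Real.sqrt 3 : ℂ)^4) * hs + ((91/64 : ℂ) + (11/16 : ℂ) * Complex.I^2 + (1/64 : ℂ) * Complex.I^4 + (-27/32 : ℂ) * (Real.sqrt 3 : ℂ) * Complex.I + (-3/32 : ℂ) * (Real.sqrt 3 : ℂ) * Complex.I^3)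 * hI) y
  have h3 := key_exp ((-(Real.sqrt 3 : ℂ) - Complex.I)/2) (by linear_combination ((9/64 : ℂ) + (45/64 : ℂ) * Complex.I^2 + (15/64 : ℂ) * Complex.I^4 + (9/32 : ℂ) * (Real.sqrt 3 : ℂ) * Complex.I + (5/16 : ℂ) * (Real.sqrt 3 : ℂ) * Complex.I^3 + (3/64 : ℂ) * (Real.sqrt 3 : ℂ)^2 + (15/64 : ℂ) * (Real.sqrt 3 : ℂ)^2 * Complex.I^2 + (3/32 : ℂ) * (Real.sqrt 3 : ℂ)^3 * Complex.I + (1/64 : ℂ) * (Real.sqrt 3 : ℂ)^4) * hs + ((91/64 : ℂ) + (11/16 : ℂ) * Complex.I^2 + (1/64 : ℂ) * Complex.I^4 + (27/32 : ℂ) * (Real.sqrt 3 : ℂ) * Complex.I + (3/32 : ℂ) * (Real.sqrt 3 : ℂ) * Complex.I^3) * hI) y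
  have h4 := key_exp (-Complex.I) (by linear_combination (0 : ℂ) * hs + ((1 : ℂ) + (-1 : ℂ) * Complex.I^2 + Complex.I^4) * hI) y
  have h5 := key_exp (((Real.sqrt 3 : ℂ) - Complex.I)/2) (by linear_combination ((9/64 : ℂ) + (45/64 : ℂ) * Complex.I^2 + (15/64 : ℂ) * Complex.I^4 + (-9/32 : ℂ) * (Real.sqrt 3 : ℂ) * Complex.I + (-5/16 : ℂ) * (Real.sqrt 3 : ℂ) * Complex.I^3 + (3/64 : ℂ) * (Real.sqrt 3 : ℂ)^2 + (15/64 : ℂ) * (Real.sqrt 3 : ℂ)^2 * Complex.I^2 + (-3/32 : ℂ) * (Real.sqrt 3 : ℂ)^3 * Complex.I + (1/64 : ℂ) * (Real.sqrt 3 : ℂ)^4) * hs + ((91/64 : ℂ) + (11/16 : ℂ) * Complex.I^2 + (1/64 : ℂ) * Complex.I^4 + (-27/32 : ℂ) * (Real.sqrt 3 : ℂ) * Complex.I + (-3/32 : ℂ) * (Real.sqrt 3 : ℂ) * Complex.I^3) * hI) y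
  simp only [Finset.sum_range_succ, Finset.sum_range_zero] at h0 h1 h2 h3 h4 h5
  have hq1 : Complex.exp (((Real.sqrt 3 : ℂ) + Complex.I)/2 * (y:ℂ)) * Complex.exp (((Real.sqrt 3 : ℂ) - Complex.I)/2 * (y:ℂ)) = Complex.exp ((Real.sqrt 3 : ℂ) * (y:ℂ)) := by
    rw [← Complex.exp_add, show ((Real.sqrt 3 : ℂ) + Complex.I)/2 * (y:ℂ) + ((Real.sqrt 3 : ℂ) - Complex.I)/2 * (y:ℂ) = (Real.sqrt 3 : ℂ) * (y:ℂ) from by ring]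
  have hq2 : Complex.exp (Complex.I * (y:ℂ)) * Complex.exp (-Complex.I * (y:ℂ)) = 1 := by
    rw [← Complex.exp_add, show Complex.I * (y:ℂ) + -Complex.I * (y:ℂ) = 0 from by ring, Complex.exp_zero]
  have hq3 : Complex.exp ((-(Real.sqrt 3 : ℂ) + Complex.I)/2 * (y:ℂ)) * Complex.exp ((-(Real.sqrt 3 : ℂ) - Complex.I)/2 * (y:ℂ)) = Complex.exp (-((Real.sqrt 3 : ℂ) * (y:ℂ))) := by
    rw [← Complex.exp_add, show (-(Real.sqrt 3 : ℂ) + Complex.I)/2 * (y:ℂ) + (-(Real.sqrt 3 : ℂ) - Complex.I)/2 * (y:ℂ) = -((Real.sqrt 3 : ℂ) * (y:ℂ)) from by ring]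
  rw [Real.cosh_eq, ← Complex.ofReal_inj]
  push_cast
  simp only [Finset.sum_range_succ, Finset.sum_range_zero]
  linear_combination (1/3 : ℂ) * hq1 + (1/3 : ℂ) * hq2 + (1/3 : ℂ) * hq3 - (1/3 : ℂ) * (Complex.exp (((Real.sqrt 3 : ℂ) - Complex.I)/2 * (y:ℂ))) * h0 - (1/3 : ℂ) * (Complex.exp (-Complex.I * (y:ℂ))) * h1 - (1/3 : ℂ) * (Complex.exp ((-(Real.sqrt 3 : ℂ) - Complex.I)/2 * (y:ℂ))) * h2 - (1/3 : ℂ) * ((f6 0 y : ℂ) + (1/2 : ℂ) * Complex.I * (f6 1 y : ℂ) + (1/4 : ℂ) * Complex.I^2 * (f6 2 y : ℂ) + (1/8 : ℂ) * Complex.I^3 * (f6 3 y : ℂ) + (1/16 : ℂ) * Complex.I^4 * (f6 4 y : ℂ) + (1/32 : ℂ) * Complex.I^5 * (f6 5 y : ℂ) + (-1/2 : ℂ) * (Real.sqrt 3 : ℂ) * (f6 1 y : ℂ) + (-1/2 : ℂ) * (Real.sqrt 3 : ℂ) * Complex.I * (f6 2 y : ℂ) + (-3/8 : ℂ) * (Real.sqrt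 3 : ℂ) * Complex.I^2 * (f6 3 y : ℂ) + (-1/4 : ℂ) * (Real.sqrt 3 : ℂ) * Complex.I^3 * (f6 4 y : ℂ) + (-5/32 : ℂ) * (Real.sqrt 3 : ℂ) * Complex.I^4 * (f6 5 y : ℂ) + (1/4 : ℂ) * (Real.sqrt 3 : ℂ)^2 * (f6 2 y : ℂ) + (3/8 : ℂ) * (Real.sqrt 3 : ℂ)^2 * Complex.I * (f6 3 y : ℂ) + (3/8 : ℂ) * (Real.sqrt 3 : ℂ)^2 * Complex.I^2 * (f6 4 y : ℂ) + (5/16 : ℂ) * (Real.sqrt 3 : ℂ)^2 * Complex.I^3 * (f6 5 y : ℂ) + (-1/8 : ℂ) * (Real.sqrt 3 : ℂ)^3 * (f6 3 y : ℂ) + (-1/4 : ℂ) * (Real.sqrt 3 : ℂ)^3 * Complex.I * (f6 4 y : ℂ) + (-5/16 : ℂ) * (Real.sqrt 3 : ℂ)^3 * Complex.I^2 * (f6 5 y : ℂ) + (1/16 : ℂ) * (Real.sqrt 3 : ℂ)^4 * (f6 4 y : ℂ) + (5/32 : ℂ) * (Real.sqrt 3 : ℂ)^4 * Complex.I * (f6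 5 y : ℂ) + (-1/32 : ℂ) * (Real.sqrt 3 : ℂ)^5 * (f6 5 y : ℂ)) * h3 - (1/3 : ℂ) * ((f6 0 y : ℂ) + Complex.I * (f6 1 y : ℂ) + Complex.I^2 * (f6 2 y : ℂ) + Complex.I^3 * (f6 3 y : ℂ) + Complex.I^4 * (f6 4 y : ℂ) + Complex.I^5 * (f6 5 y : ℂ)) * h4 - (1/3 : ℂ) * ((f6 0 y : ℂ) + (1/2 : ℂ) * Complex.I * (f6 1 y : ℂ) + (1/4 : ℂ) * Complex.I^2 * (f6 2 y : ℂ) + (1/8 : ℂ) * Complex.I^3 * (f6 3 y : ℂ) + (1/16 : ℂ) * Complex.I^4 * (f6 4 y : ℂ) + (1/32 : ℂ) * Complex.I^5 * (f6 5 y : ℂ) + (1/2 : ℂ) * (Real.sqrt 3 : ℂ) * (f6 1 y : ℂ) + (1/2 : ℂ) * (Real.sqrt 3 : ℂ) * Complex.I * (f6 2 y : ℂ) + (3/8 : ℂ) * (Real.sqrt 3 : ℂ) * Complex.I^2 * (f6 3 y : ℂ) + (1/4 : ℂ) * (Real.sqrt 3 : ℂ) * Complex.I^3 * (f6 4 y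 : ℂ) + (5/32 : ℂ) * (Real.sqrt 3 : ℂ) * Complex.I^4 * (f6 5 y : ℂ) + (1/4 : ℂ) * (Real.sqrt 3 : ℂ)^2 * (f6 2 y : ℂ) + (3/8 : ℂ) * (Real.sqrt 3 : ℂ)^2 * Complex.I * (f6 3 y : ℂ) + (3/8 : ℂ) * (Real.sqrt 3 : ℂ)^2 * Complex.I^2 * (f6 4 y : ℂ) + (5/16 : ℂ) * (Real.sqrt 3 : ℂ)^2 * Complex.I^3 * (f6 5 y : ℂ) + (1/8 : ℂ) * (Real.sqrt 3 : ℂ)^3 * (f6 3 y : ℂ) + (1/4 : ℂ) * (Real.sqrt 3 : ℂ)^3 * Complex.I * (f6 4 y : ℂ) + (5/16 : ℂ) * (Real.sqrt 3 : ℂ)^3 * Complex.I^2 * (f6 5 y : ℂ) + (1/16 : ℂ) * (Real.sqrt 3 : ℂ)^4 * (f6 4 y : ℂ) + (5/32 : ℂ) * (Real.sqrt 3 : ℂ)^4 * Complex.I * (f6 5 y : ℂ) + (1/32 : ℂ) * (Real.sqrt 3 : ℂ)^5 * (f6 5 y : ℂ)) * h5 - (1/3 : ℂ) * ((81/512 :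 ℂ) * (f6 5 y : ℂ)^2 + (27/128 : ℂ) * (f6 4 y : ℂ)^2 + (27/64 : ℂ) * (f6 3 y : ℂ) * (f6 5 y : ℂ) + (9/32 : ℂ) * (f6 3 y : ℂ)^2 + (9/16 : ℂ) * (f6 2 y : ℂ) * (f6 4 y : ℂ) + (3/8 : ℂ) * (f6 2 y : ℂ)^2 + (9/16 : ℂ) * (f6 1 y : ℂ) * (f6 5 y : ℂ) + (3/4 : ℂ) * (f6 1 y : ℂ) * (f6 3 y : ℂ) + (1/2 : ℂ) * (f6 1 y : ℂ)^2 + (3/4 : ℂ) * (f6 0 y : ℂ) * (f6 4 y : ℂ) + (f6 0 y : ℂ) * (f6 2 y : ℂ) + (-135/512 : ℂ) * Complex.I^2 * (f6 5 y : ℂ)^2 + (-9/32 : ℂ) * Complex.I^2 * (f6 4 y : ℂ)^2 + (-9/32 : ℂ) * Complex.I^2 * (f6 3 y : ℂ) * (f6 5 y : ℂ) + (-9/32 : ℂ) * Complex.I^2 * (f6 3 y : ℂ)^2 + (-3/16 : ℂ) * Complex.I^2 * (f6 2 y : ℂ) * (f6 4 y : ℂ) + (-1/4 : ℂ) * Complex.I^2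 * (f6 2 y : ℂ)^2 + (15/16 : ℂ) * Complex.I^2 * (f6 1 y : ℂ) * (f6 5 y : ℂ) + (3/2 : ℂ) * Complex.I^2 * (f6 0 y : ℂ) * (f6 4 y : ℂ) + (45/256 : ℂ) * Complex.I^4 * (f6 5 y : ℂ)^2 + (9/64 : ℂ) * Complex.I^4 * (f6 4 y : ℂ)^2 + (3/32 : ℂ) * Complex.I^4 * (f6 3 y : ℂ)^2 + (-1/16 : ℂ) * Complex.I^4 * (f6 2 y : ℂ) * (f6 4 y : ℂ) + (-5/16 : ℂ) * Complex.I^4 * (f6 1 y : ℂ) * (f6 5 y : ℂ) + (-15/256 : ℂ) * Complex.I^6 * (f6 5 y : ℂ)^2 + (-1/32 : ℂ) * Complex.I^6 * (f6 4 y : ℂ)^2 + (1/32 : ℂ) * Complex.I^6 * (f6 3 y : ℂ) * (f6 5 y : ℂ) + (5/512 : ℂ) * Complex.I^8 * (f6 5 y : ℂ)^2 + (27/512 : ℂ) * (Real.sqrt 3 : ℂ)^2 * (f6 5 y : ℂ)^2 + (9/128 : ℂ) * (Real.sqrt 3 : ℂ)^2 * (f6 4 y : ℂ)^2 + (9/64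 : ℂ) * (Real.sqrt 3 : ℂ)^2 * (f6 3 y : ℂ) * (f6 5 y : ℂ) + (3/32 : ℂ) * (Real.sqrt 3 : ℂ)^2 * (f6 3 y : ℂ)^2 + (3/16 : ℂ) * (Real.sqrt 3 : ℂ)^2 * (f6 2 y : ℂ) * (f6 4 y : ℂ) + (1/8 : ℂ) * (Real.sqrt 3 : ℂ)^2 * (f6 2 y : ℂ)^2 + (3/16 : ℂ) * (Real.sqrt 3 : ℂ)^2 * (f6 1 y : ℂ) * (f6 5 y : ℂ) + (1/4 : ℂ) * (Real.sqrt 3 : ℂ)^2 * (f6 1 y : ℂ) * (f6 3 y : ℂ) + (1/4 : ℂ) * (Real.sqrt 3 : ℂ)^2 * (f6 0 y : ℂ) * (f6 4 y : ℂ) + (-45/512 : ℂ) * (Real.sqrt 3 : ℂ)^2 * Complex.I^2 * (f6 5 y : ℂ)^2 + (-3/32 : ℂ) * (Real.sqrt 3 : ℂ)^2 * Complex.I^2 * (f6 4 y : ℂ)^2 + (-3/32 : ℂ) * (Real.sqrt 3 : ℂ)^2 * Complex.I^2 * (f6 3 y : ℂ) * (f6 5 y : ℂ) + (-3/32 : ℂ)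 * (Real.sqrt 3 : ℂ)^2 * Complex.I^2 * (f6 3 y : ℂ)^2 + (-1/16 : ℂ) * (Real.sqrt 3 : ℂ)^2 * Complex.I^2 * (f6 2 y : ℂ) * (f6 4 y : ℂ) + (5/16 : ℂ) * (Real.sqrt 3 : ℂ)^2 * Complex.I^2 * (f6 1 y : ℂ) * (f6 5 y : ℂ) + (15/256 : ℂ) * (Real.sqrt 3 : ℂ)^2 * Complex.I^4 * (f6 5 y : ℂ)^2 + (3/64 : ℂ) * (Real.sqrt 3 : ℂ)^2 * Complex.I^4 * (f6 4 y : ℂ)^2 + (-5/256 : ℂ) * (Real.sqrt 3 : ℂ)^2 * Complex.I^6 * (f6 5 y : ℂ)^2 + (9/512 : ℂ) * (Real.sqrt 3 : ℂ)^4 * (f6 5 y : ℂ)^2 + (3/128 : ℂ) * (Real.sqrt 3 : ℂ)^4 * (f6 4 y : ℂ)^2 + (3/64 : ℂ) * (Real.sqrt 3 : ℂ)^4 * (f6 3 y : ℂ) * (f6 5 y : ℂ) + (1/32 : ℂ) * (Real.sqrt 3 : ℂ)^4 * (f6 3 y : ℂ)^2 + (1/16 : ℂ) * (Real.sqrt 3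 : ℂ)^4 * (f6 2 y : ℂ) * (f6 4 y : ℂ) + (1/16 : ℂ) * (Real.sqrt 3 : ℂ)^4 * (f6 1 y : ℂ) * (f6 5 y : ℂ) + (-15/512 : ℂ) * (Real.sqrt 3 : ℂ)^4 * Complex.I^2 * (f6 5 y : ℂ)^2 + (-1/32 : ℂ) * (Real.sqrt 3 : ℂ)^4 * Complex.I^2 * (f6 4 y : ℂ)^2 + (-1/32 : ℂ) * (Real.sqrt 3 : ℂ)^4 * Complex.I^2 * (f6 3 y : ℂ) * (f6 5 y : ℂ) + (5/256 : ℂ) * (Real.sqrt 3 : ℂ)^4 * Complex.I^4 * (f6 5 y : ℂ)^2 + (3/512 : ℂ) * (Real.sqrt 3 : ℂ)^6 * (f6 5 y : ℂ)^2 + (1/128 : ℂ) * (Real.sqrt 3 : ℂ)^6 * (f6 4 y : ℂ)^2 + (1/64 : ℂ) * (Real.sqrt 3 : ℂ)^6 * (f6 3 y : ℂ) * (f6 5 y : ℂ) + (-5/512 : ℂ) * (Real.sqrt 3 : ℂ)^6 * Complex.I^2 * (f6 5 y : ℂ)^2 + (1/512 : ℂ) * (Real.sqrt 3 : ℂ)^8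 * (f6 5 y : ℂ)^2) * hs - (1/3 : ℂ) * ((-1293/512 : ℂ) * (f6 5 y : ℂ)^2 + (-303/128 : ℂ) * (f6 4 y : ℂ)^2 + (81/64 : ℂ) * (f6 3 y : ℂ) * (f6 5 y : ℂ) + (-69/32 : ℂ) * (f6 3 y : ℂ)^2 + (27/16 : ℂ) * (f6 2 y : ℂ) * (f6 4 y : ℂ) + (-15/8 : ℂ) * (f6 2 y : ℂ)^2 + (27/16 : ℂ) * (f6 1 y : ℂ) * (f6 5 y : ℂ) + (9/4 : ℂ) * (f6 1 y : ℂ) * (f6 3 y : ℂ) + (-3/2 : ℂ) * (f6 1 y : ℂ)^2 + (9/4 : ℂ) * (f6 0 y : ℂ) * (f6 4 y : ℂ) + (3 : ℂ) * (f6 0 y : ℂ) * (f6 2 y : ℂ) + (111/64 : ℂ) * Complex.I^2 * (f6 5 y : ℂ)^2 + (195/128 : ℂ) * Complex.I^2 * (f6 4 y : ℂ)^2 + (-135/64 : ℂ) * Complex.I^2 * (f6 3 y : ℂ) * (f6 5 y : ℂ) + (21/16 : ℂ) * Complex.I^2 * (f6 3 y : ℂ)^2 + (-9/4 : ℂ)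 * Complex.I^2 * (f6 2 y : ℂ) * (f6 4 y : ℂ) + (9/8 : ℂ) * Complex.I^2 * (f6 2 y : ℂ)^2 + (9/8 : ℂ) * Complex.I^2 * (f6 1 y : ℂ) * (f6 5 y : ℂ) + (-9/4 : ℂ) * Complex.I^2 * (f6 1 y : ℂ) * (f6 3 y : ℂ) + (9/4 : ℂ) * Complex.I^2 * (f6 0 y : ℂ) * (f6 4 y : ℂ) + (-309/256 : ℂ) * Complex.I^4 * (f6 5 y : ℂ)^2 + (-141/128 : ℂ) * Complex.I^4 * (f6 4 y : ℂ)^2 + (135/64 : ℂ) * Complex.I^4 * (f6 3 y : ℂ) * (f6 5 y : ℂ) + (-33/32 : ℂ) * Complex.I^4 * (f6 3 y : ℂ)^2 + (33/16 : ℂ) * Complex.I^4 * (f6 2 y : ℂ) * (f6 4 y : ℂ) + (-33/16 : ℂ) * Complex.I^4 * (f6 1 y : ℂ) * (f6 5 y : ℂ) + (33/32 : ℂ) * Complex.I^6 * (f6 5 y : ℂ)^2 + (129/128 : ℂ) * Complex.I^6 * (f6 4 y : ℂ)^2 + (-129/64 : ℂ) * Complex.I^6 * (f6 3 y : ℂ)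 * (f6 5 y : ℂ) + (-513/512 : ℂ) * Complex.I^8 * (f6 5 y : ℂ)^2) * hI
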